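/- Any (v_r, b_k)-configuration with point deficiency δ_p = v - (r(k-1)+1) < k - (r+k)/gcd(r,k), or line deficiency δ_l = b - (k(r-1)+1) < r - (r+k)/gcd(r,k), is irreducible. -/

import Mathlib

/-- A combinatorial `(v_r, b_k)`-configuration. -/
structure Config (P L : Type) (r k : ℕ) where
  I : P → L → Prop
  plinear : ∀ p q : P, p ≠ q → ∀ l m : L, I p l → I q l → I p m → I q m → l = m
  pointDeg : ∀ p : P, {l : L | I p l}.ncard = r
  lineDeg : ∀ l : L, {p : P | I p l}.ncard = k

/-- General reducibility of a `(v_r, b_k)`-configuration: there are a set `R` of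
`k/gcd(r,k)` points and a set `N` of `r/gcd(r,k)` lines, and a bijection `f'` between
the multiset of incidences `(q, n)` with `n ∈ N`, `q` on `n`, `q ∉ R`, and the
multiset of incidences `(m, x)` with `x ∈ R`, `x` on `m`, `m ∉ N`, such that each
such `q` is not collinear with any point of its assigned line except possibly through
a line of `N` or with a point of `R`. -/
def GenReducible {P L : Type} {r k : ℕ} (C : Config P L r k) : Prop :=
  ∃ (R : Set P) (N : Set L) (f' : P × L → L × P),
    R.ncard = k / Nat.gcd r k ∧ N.ncard = r / Nat.gcd r k ∧
    Set.BijOn f' {ql : P × L | ql.2 ∈ N ∧ C.I ql.1 ql.2 ∧ ql.1 ∉ R}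
      {mx : L × P | mx.2 ∈ R ∧ C.I mx.2 mx.1 ∧ mx.1 ∉ N} ∧
    ∀ ql : P × L, ql.2 ∈ N → C.I ql.1 ql.2 → ql.1 ∉ R →
      ∀ x : P, C.I x (f' ql).1 → x ≠ ql.1 → x ∉ R →
        ∀ s : L, C.I ql.1 s → C.I x s → s ∈ N

/-- Auxiliary counting lemma: a "fibered" set of pairs with `a` possible first
coordinates and `b` choices of second coordinate for each has `a * b` elements. -/
lemma ncard_fiber {A B : Type} [Fintype A] [Fintype B] (U : Set A) (T : A → Set B)
    (a b : ℕ) (ha : U.ncard = a) (hb : ∀ x ∈ U, (T x).ncard = b) :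
    {p : A × B | p.1 ∈ U ∧ p.2 ∈ T p.1}.ncard = a * b := by
  classical
  set S : Set (A × B) := {p : A × B | p.1 ∈ U ∧ p.2 ∈ T p.1} with hS
  have hSf : S.Finite := Set.toFinite _
  have hUf : U.Finite := Set.toFinite _
  rw [Set.ncard_eq_toFinset_card _ hSf]
  have hmap : ∀ p ∈ hSf.toFinset, p.1 ∈ hUf.toFinset := by
    intro p hp
    rw [Set.Finite.mem_toFinset] at hp ⊢
    exact hp.1
  rw [Finset.card_eq_sum_card_fiberwise (f := Prod.fst) hmap]
  have hfib : ∀ x ∈ hUf.toFinset, (hSf.toFinset.filter (fun p => p.1 = x)).card = b := by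
    intro x hx
    rw [Set.Finite.mem_toFinset] at hx
    rw [← hb x hx, Set.ncard_eq_toFinset_card _ (Set.toFinite (T x))]
    apply Finset.card_nbij' (fun p => p.2) (fun y => (x, y))
    · intro p hp
      simp only [Finset.mem_coe, Finset.mem_filter, Set.Finite.mem_toFinset] at hp ⊢
      obtain ⟨⟨h1, h2⟩, h3⟩ := hp
      rw [h3] at h2; exact h2
    · intro y hy
      simp only [Finset.mem_coe, Finset.mem_filter, Set.Finite.mem_toFinset] at hy ⊢
      exact ⟨⟨hx, hy⟩, trivial⟩
    · intro p hp
      simp only [Finset.mem_coe, Finset.mem_filter] at hp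
      rw [← hp.2]
    · intro y _
      rfl
  rw [Finset.sum_congr rfl hfib, Finset.sum_const, smul_eq_mul,
    ← Set.ncard_eq_toFinset_card _ hUf, ha]

/-- A finite type is partitioned by a chosen point `q`, the elements `≠ q`
satisfying a predicate, and the elements `≠ q` not satisfying it. -/
lemma card_part {α : Type} [Fintype α] (q : α) (Pr : α → Prop) :
    Fintype.card α = 1 + {y | y ≠ q ∧ Pr y}.ncard + {y | y ≠ q ∧ ¬ Pr y}.ncard := by
  classical
  have huniv : (Set.univ : Set α)
      = {q} ∪ ({y | y ≠ q ∧ Pr y} ∪ {y | y ≠ q ∧ ¬ Pr y}) := by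
    ext y
    by_cases hy : y = q <;> by_cases hp : Pr y <;> simp [hy, hp]
  have h2 := congrArg Set.ncard huniv
  rw [Set.ncard_univ, Nat.card_eq_fintype_card,
    Set.ncard_union_eq (by
      rw [Set.disjoint_left]
      rintro y (rfl : y = q) (⟨h, -⟩ | ⟨h, -⟩) <;> exact h rfl),
    Set.ncard_union_eq (by
      rw [Set.disjoint_left]
      rintro y ⟨-, h1⟩ ⟨-, h2⟩
      exact h2 h1),
    Set.ncard_singleton] at h2
  omega

/-- In a configuration, each point `q` is collinear with exactly `r * (k - 1)`
other points. -/
lemma coll_count {P L : Type} [Fintype P] [Fintype L] {r k : ℕ} (C : Config P L r k)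
    (q : P) : {y : P | y ≠ q ∧ ∃ l, C.I q l ∧ C.I y l}.ncard = r * (k - 1) := by
  have key := ncard_fiber {l : L | C.I q l} (fun l => {y : P | C.I y l} \ {q}) r (k - 1)
    (C.pointDeg q)
    (fun l hl => by
      show ({y : P | C.I y l} \ {q}).ncard = k - 1
      rw [Set.ncard_diff_singleton_of_mem (show q ∈ {y : P | C.I y l} from hl)
        , C.lineDeg l])
  have himg : {y : P | y ≠ q ∧ ∃ l, C.I q l ∧ C.I y l}
      = Prod.snd '' {p : L × P | p.1 ∈ {l : L | C.I q l}
          ∧ p.2 ∈ ({y : P | C.I y p.1} \ {q})} := by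
    ext y
    simp only [Set.mem_image, Set.mem_setOf_eq, Set.mem_diff, Set.mem_singleton_iff]
    constructor
    · rintro ⟨hyq, l, hql, hyl⟩
      exact ⟨(l, y), ⟨hql, hyl, hyq⟩, rfl⟩
    · rintro ⟨⟨l, y'⟩, ⟨hql, hyl, hyq⟩, rfl⟩
      exact ⟨hyq, l, hql, hyl⟩
  rw [himg, Set.ncard_image_of_injOn, key]
  rintro ⟨l, y⟩ ⟨hql, hyl, hyq⟩ ⟨l', y'⟩ ⟨hql', hyl', hyq'⟩ h
  simp only [Prod.ext_iff] at h ⊢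
  cases h
  exact ⟨C.plinear q y (Ne.symm hyq) l l' hql hyl hql' hyl', rfl⟩

/-- In a configuration, each line `m` meets exactly `k * (r - 1)` other lines. -/
lemma meet_count {P L : Type} [Fintype P] [Fintype L] {r k : ℕ} (C : Config P L r k)
    (m : L) : {l : L | l ≠ m ∧ ∃ s, C.I s m ∧ C.I s l}.ncard = k * (r - 1) := by
  have key := ncard_fiber {s : P | C.I s m} (fun s => {l : L | C.I s l} \ {m}) k (r - 1)
    (C.lineDeg m)
    (fun s hs => by
      show ({l : L | C.I s l} \ {m}).ncard = r - 1
      rw [Set.ncard_diff_singleton_of_mem (show m ∈ {l : L | C.I s l} from hs)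
        , C.pointDeg s])
  have himg : {l : L | l ≠ m ∧ ∃ s, C.I s m ∧ C.I s l}
      = Prod.snd '' {p : P × L | p.1 ∈ {s : P | C.I s m}
          ∧ p.2 ∈ ({l : L | C.I p.1 l} \ {m})} := by
    ext l
    simp only [Set.mem_image, Set.mem_setOf_eq, Set.mem_diff, Set.mem_singleton_iff]
    constructor
    · rintro ⟨hlm, s, hsm, hsl⟩
      exact ⟨(s, l), ⟨hsm, hsl, hlm⟩, rfl⟩
    · rintro ⟨⟨s, l'⟩, ⟨hsm, hsl, hlm⟩, rfl⟩
      exact ⟨hlm, s, hsm, hsl⟩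
  rw [himg, Set.ncard_image_of_injOn, key]
  rintro ⟨s, l⟩ ⟨hsm, hsl, hlm⟩ ⟨s', l'⟩ ⟨hsm', hsl', hlm'⟩ h
  simp only [Prod.ext_iff] at h ⊢
  cases h
  refine ⟨?_, rfl⟩
  by_contra hne
  exact hlm (C.plinear s s' hne l m hsl hsl' hsm hsm')

/-- any `(v_r, b_k)`-configuration with point deficiency
`δ_p = v - (r(k-1)+1) < k - (r+k)/gcd(r,k)` or line deficiency
`δ_l = b - (k(r-1)+1) < r - (r+k)/gcd(r,k)` is irreducible. -/
theorem small_deficiency_irreducible {P L : Type} [Fintype P] [Fintype L] {r k : ℕ}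
    (hr : 1 ≤ r) (hk : 1 ≤ k) (C : Config P L r k)
    (h : (Fintype.card P : ℤ) - ((r : ℤ) * ((k : ℤ) - 1) + 1)
            < (k : ℤ) - (((r + k) / Nat.gcd r k : ℕ) : ℤ) ∨
         (Fintype.card L : ℤ) - ((k : ℤ) * ((r : ℤ) - 1) + 1)
            < (r : ℤ) - (((r + k) / Nat.gcd r k : ℕ) : ℤ)) :
    ¬ GenReducible C := by
  classical
  rintro ⟨R, N, f', hR, hN, hbij, hcond⟩
  have hd1 : 1 ≤ Nat.gcd r k := Nat.gcd_pos_of_pos_left k hr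
  set d := Nat.gcd r k with hdd
  have hdr : d ∣ r := Nat.gcd_dvd_left r k
  have hdk : d ∣ k := Nat.gcd_dvd_right r k
  have hrd1 : 1 ≤ r / d := (Nat.one_le_div_iff hd1).2 (Nat.le_of_dvd hr hdr)
  have hkd1 : 1 ≤ k / d := (Nat.one_le_div_iff hd1).2 (Nat.le_of_dvd hk hdk)
  have hsum : (r + k) / d = r / d + k / d := Nat.add_div_of_dvd_right hdr
  have hNne : N.Nonempty := Set.nonempty_of_ncard_ne_zero (by rw [hN]; omega)
  obtain ⟨n0, hn0⟩ := hNne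
  have hcast1 : ((r * (k - 1) : ℕ) : ℤ) = (r : ℤ) * ((k : ℤ) - 1) := by
    rw [Nat.cast_mul]; congr 1; omega
  have hcast2 : ((k * (r - 1) : ℕ) : ℤ) = (k : ℤ) * ((r : ℤ) - 1) := by
    rw [Nat.cast_mul]; congr 1; omega
  rcases h with hp | hl
  · -- point-deficiency branch
    rw [← hcast1] at hp
    have hRne : R.Nonempty := Set.nonempty_of_ncard_ne_zero (by rw [hR]; omega)
    obtain ⟨q0, hq0⟩ := hRne
    have hv0 := card_part q0 (fun y => ∃ l, C.I q0 l ∧ C.I y l)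
    rw [coll_count C q0] at hv0
    have hkdlt : k / d < k := by omega
    -- choose a point `q` on `n0` outside `R`
    have hnotsub : ¬ ({p : P | C.I p n0} ⊆ R) := by
      intro hsub
      have h1 := Set.ncard_le_ncard hsub (Set.toFinite R)
      rw [C.lineDeg n0, hR] at h1
      omega
    obtain ⟨q, hqn0, hqR⟩ := Set.not_subset.1 hnotsub
    have hmemsrc : (q, n0) ∈ {ql : P × L | ql.2 ∈ N ∧ C.I ql.1 ql.2 ∧ ql.1 ∉ R} :=
      ⟨hn0, hqn0, hqR⟩
    obtain ⟨⟨m, x⟩, hfeq⟩ : ∃ p, f' (q, n0) = p := ⟨_, rfl⟩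
    have htgt := hbij.mapsTo hmemsrc
    rw [hfeq] at htgt
    obtain ⟨hxR, hxm, hmN⟩ := htgt
    have hcnd : ∀ y : P, C.I y m → y ≠ q → y ∉ R →
        ∀ s : L, C.I q s → C.I y s → s ∈ N := by
      intro y h1 h2 h3 s h4 h5
      have := hcond (q, n0) hn0 hqn0 hqR y (by rw [hfeq]; exact h1) h2 h3 s h4 h5
      exact this
    -- bad sets on the line `m`
    have hb1 : ({y : P | C.I y m} ∩ R).ncard ≤ k / d := by
      rw [← hR]; exact Set.ncard_le_ncard Set.inter_subset_right (Set.toFinite R)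
    have hb2 : {y : P | C.I y m ∧ ∃ l, l ∈ N ∧ C.I q l ∧ C.I y l}.ncard ≤ r / d := by
      have hch : ∀ y : P, ∃ l : L,
          (C.I y m ∧ ∃ l', l' ∈ N ∧ C.I q l' ∧ C.I y l') → l ∈ N ∧ C.I q l ∧ C.I y l := by
        intro y
        by_cases hy : C.I y m ∧ ∃ l', l' ∈ N ∧ C.I q l' ∧ C.I y l'
        · obtain ⟨-, l, hl⟩ := hy
          exact ⟨l, fun _ => hl⟩
        · exact ⟨n0, fun hcon => absurd hcon hy⟩
      choose g hg using hch
      rw [← hN]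
      apply Set.ncard_le_ncard_of_injOn g (fun y hy => (hg y hy).1) ?_ (Set.toFinite N)
      intro y hy y' hy' hgy
      try simp only [Set.mem_setOf_eq] at hy hy'
      by_contra hne
      obtain ⟨h1, h2, h3⟩ := hg y hy
      obtain ⟨h1', h2', h3'⟩ := hg y' hy'
      have hgm : g y = m := C.plinear y y' hne (g y) m h3 (hgy ▸ h3') hy.1 hy'.1
      exact hmN (hgm ▸ h1)
    have hcoverk : k ≤ ({y : P | C.I y m}
          \ (({y : P | C.I y m} ∩ R) ∪ {y : P | C.I y m ∧ ∃ l, l ∈ N ∧ C.I q l ∧ C.I y l})).ncard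
        + (({y : P | C.I y m} ∩ R).ncard
          + {y : P | C.I y m ∧ ∃ l, l ∈ N ∧ C.I q l ∧ C.I y l}.ncard) := by
      have hsplit : {y : P | C.I y m} ⊆ ({y : P | C.I y m}
            \ (({y : P | C.I y m} ∩ R) ∪ {y : P | C.I y m ∧ ∃ l, l ∈ N ∧ C.I q l ∧ C.I y l}))
          ∪ (({y : P | C.I y m} ∩ R) ∪ {y : P | C.I y m ∧ ∃ l, l ∈ N ∧ C.I q l ∧ C.I y l}) := by
        intro y hy
        by_cases hmem : y ∈ ({y : P | C.I y m} ∩ R) ∪ {y : P | C.I y m ∧ ∃ l, l ∈ N ∧ C.I q l ∧ C.I y l}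
        · exact Or.inr hmem
        · exact Or.inl ⟨hy, hmem⟩
      have h1 := Set.ncard_le_ncard hsplit (Set.toFinite _)
      have h2 := Set.ncard_union_le ({y : P | C.I y m}
          \ (({y : P | C.I y m} ∩ R) ∪ {y : P | C.I y m ∧ ∃ l, l ∈ N ∧ C.I q l ∧ C.I y l}))
        (({y : P | C.I y m} ∩ R) ∪ {y : P | C.I y m ∧ ∃ l, l ∈ N ∧ C.I q l ∧ C.I y l})
      have h3 := Set.ncard_union_le ({y : P | C.I y m} ∩ R)
        {y : P | C.I y m ∧ ∃ l, l ∈ N ∧ C.I q l ∧ C.I y l}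
      rw [C.lineDeg m] at h1
      omega
    have hgood : {y : P | C.I y m}
          \ (({y : P | C.I y m} ∩ R) ∪ {y : P | C.I y m ∧ ∃ l, l ∈ N ∧ C.I q l ∧ C.I y l})
        ⊆ {y : P | y ≠ q ∧ ¬ ∃ l, C.I q l ∧ C.I y l} := by
      rintro y ⟨hyB, hyn⟩
      have hy1 : y ∉ ({y : P | C.I y m} ∩ R) := fun hcon => hyn (Or.inl hcon)
      have hy2 : y ∉ {y : P | C.I y m ∧ ∃ l, l ∈ N ∧ C.I q l ∧ C.I y l} :=
        fun hcon => hyn (Or.inr hcon)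
      have hyR : y ∉ R := fun hcon => hy1 ⟨hyB, hcon⟩
      have hyq : y ≠ q := by
        rintro rfl
        exact hy2 ⟨hyB, n0, hn0, hqn0, hqn0⟩
      refine ⟨hyq, ?_⟩
      rintro ⟨l, hql, hyl⟩
      exact hy2 ⟨hyB, l, hcnd y hyB hyq hyR l hql hyl, hql, hyl⟩
    have hglen := Set.ncard_le_ncard hgood (Set.toFinite _)
    have hv := card_part q (fun y => ∃ l, C.I q l ∧ C.I y l)
    rw [coll_count C q] at hv
    omega
  · -- line-deficiency branch
    rw [← hcast2] at hl
    have hb0 := card_part n0 (fun l => ∃ s, C.I s n0 ∧ C.I s l)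
    rw [meet_count C n0] at hb0
    have hdlt : (r + k) / d < r := by omega
    have hd2 : 2 ≤ d := by
      by_contra hcon
      have hcon1 : d = 1 := by omega
      rw [hcon1, Nat.div_one] at hdlt
      omega
    have hkdlt : k / d < k := Nat.div_lt_self (by omega) (by omega)
    -- choose a point `q` on `n0` outside `R`
    have hnotsub : ¬ ({p : P | C.I p n0} ⊆ R) := by
      intro hsub
      have h1 := Set.ncard_le_ncard hsub (Set.toFinite R)
      rw [C.lineDeg n0, hR] at h1
      omega
    obtain ⟨q, hqn0, hqR⟩ := Set.not_subset.1 hnotsub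
    have hmemsrc : (q, n0) ∈ {ql : P × L | ql.2 ∈ N ∧ C.I ql.1 ql.2 ∧ ql.1 ∉ R} :=
      ⟨hn0, hqn0, hqR⟩
    obtain ⟨⟨m, x⟩, hfeq⟩ : ∃ p, f' (q, n0) = p := ⟨_, rfl⟩
    have htgt := hbij.mapsTo hmemsrc
    rw [hfeq] at htgt
    obtain ⟨hxR, hxm, hmN⟩ := htgt
    have hcnd : ∀ y : P, C.I y m → y ≠ q → y ∉ R →
        ∀ s : L, C.I q s → C.I y s → s ∈ N := by
      intro y h1 h2 h3 s h4 h5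
      have := hcond (q, n0) hn0 hqn0 hqR y (by rw [hfeq]; exact h1) h2 h3 s h4 h5
      exact this
    have hbm := card_part m (fun l => ∃ s, C.I s m ∧ C.I s l)
    rw [meet_count C m] at hbm
    by_cases hqm : C.I q m
    · -- degenerate case: `q` lies on `m`
      have hsub : {y : P | C.I y m} ⊆ insert q R := by
        intro y hy
        by_contra hyn
        simp only [Set.mem_insert_iff, not_or] at hyn
        exact hmN (hcnd y hy hyn.1 hyn.2 m hqm hy)
      have hk2 : k ≤ 1 + k / d := by
        have h1 := Set.ncard_le_ncard hsub (Set.toFinite _)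
        have h2 := Set.ncard_insert_le q R
        rw [C.lineDeg m] at h1
        rw [hR] at h2
        omega
      by_cases hz : ∀ z : P, C.I z m
      · -- every point lies on `m`: impossible
        have hxq : x ≠ q := fun hcon => hqR (hcon ▸ hxR)
        have h2k : 2 ≤ k := by
          have hss : ({x, q} : Set P) ⊆ {y : P | C.I y m} := by
            rintro y (rfl | rfl)
            exacts [hxm, hqm]
          have hcc := Set.ncard_le_ncard hss (Set.toFinite _)
          rwa [Set.ncard_pair hxq, C.lineDeg m] at hcc
        have h2n : 1 < {p : P | C.I p n0}.ncard := by rw [C.lineDeg n0]; omega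
        obtain ⟨y1, hy1, y2, hy2, hyne⟩ := (Set.one_lt_ncard (Set.toFinite _)).1 h2n
        exact hmN ((C.plinear y1 y2 hyne n0 m hy1 hy2 (hz y1) (hz y2)) ▸ hn0)
      · -- there is a point `z` off `m`
        push_neg at hz
        obtain ⟨z, hzm⟩ := hz
        have hbad : {l : L | C.I z l ∧ ∃ s, C.I s l ∧ C.I s m}.ncard ≤ k := by
          have hch : ∀ l : L, ∃ s : P,
              (C.I z l ∧ ∃ s', C.I s' l ∧ C.I s' m) → C.I s l ∧ C.I s m := by
            intro l
            by_cases hlm : C.I z l ∧ ∃ s', C.I s' l ∧ C.I s' m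
            · obtain ⟨-, s, hs⟩ := hlm
              exact ⟨s, fun _ => hs⟩
            · exact ⟨z, fun hcon => absurd hcon hlm⟩
          choose g hg using hch
          have hinj : {l : L | C.I z l ∧ ∃ s, C.I s l ∧ C.I s m}.ncard
              ≤ {s : P | C.I s m}.ncard := by
            apply Set.ncard_le_ncard_of_injOn g (fun l hl => (hg l hl).2) ?_ (Set.toFinite _)
            intro l hl l' hl' hgl
            try simp only [Set.mem_setOf_eq] at hl hl'
            obtain ⟨h1, h2⟩ := hg l hl
            obtain ⟨h1', h2'⟩ := hg l' hl'
            have hgz : g l ≠ z := fun hcon => hzm (hcon ▸ h2)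
            exact C.plinear z (g l) (Ne.symm hgz) l l' hl.1 h1 hl'.1 (hgl ▸ h1')
          rw [C.lineDeg m] at hinj
          exact hinj
        have hND : r ≤ {l : L | l ≠ m ∧ ¬ ∃ s, C.I s m ∧ C.I s l}.ncard + k := by
          have hsplit : {l : L | C.I z l} ⊆ {l : L | l ≠ m ∧ ¬ ∃ s, C.I s m ∧ C.I s l}
              ∪ {l : L | C.I z l ∧ ∃ s, C.I s l ∧ C.I s m} := by
            intro l hl
            by_cases hmeet : ∃ s, C.I s l ∧ C.I s m
            · exact Or.inr ⟨hl, hmeet⟩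
            · refine Or.inl ⟨fun hcon => hzm (hcon ▸ hl), ?_⟩
              rintro ⟨s, h1, h2⟩
              exact hmeet ⟨s, h2, h1⟩
          have h1 := Set.ncard_le_ncard hsplit (Set.toFinite _)
          have h2 := Set.ncard_union_le {l : L | l ≠ m ∧ ¬ ∃ s, C.I s m ∧ C.I s l}
            {l : L | C.I z l ∧ ∃ s, C.I s l ∧ C.I s m}
          rw [C.pointDeg z] at h1
          omega
        omega
    · -- main case: `q` is not on `m`
      have hc1 : ({l : L | C.I q l} ∩ N).ncard ≤ r / d := by
        rw [← hN]; exact Set.ncard_le_ncard Set.inter_subset_right (Set.toFinite N)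
      have hc2 : {l : L | C.I q l ∧ ∃ s, C.I s l ∧ C.I s m ∧ s ∈ R}.ncard ≤ k / d := by
        have hch : ∀ l : L, ∃ s : P,
            (C.I q l ∧ ∃ s', C.I s' l ∧ C.I s' m ∧ s' ∈ R) →
              C.I s l ∧ C.I s m ∧ s ∈ R := by
          intro l
          by_cases hlm : C.I q l ∧ ∃ s', C.I s' l ∧ C.I s' m ∧ s' ∈ R
          · obtain ⟨-, s, hs⟩ := hlm
            exact ⟨s, fun _ => hs⟩
          · exact ⟨q, fun hcon => absurd hcon hlm⟩
        choose g hg using hch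
        rw [← hR]
        apply Set.ncard_le_ncard_of_injOn g (fun l hl => (hg l hl).2.2) ?_ (Set.toFinite R)
        intro l hl l' hl' hgl
        try simp only [Set.mem_setOf_eq] at hl hl'
        obtain ⟨h1, h2, h3⟩ := hg l hl
        obtain ⟨h1', h2', h3'⟩ := hg l' hl'
        have hgq : g l ≠ q := fun hcon => hqR (hcon ▸ h3)
        exact C.plinear q (g l) (Ne.symm hgq) l l' hl.1 h1 hl'.1 (hgl ▸ h1')
      have hgood : {l : L | C.I q l}
            \ (({l : L | C.I q l} ∩ N) ∪ {l : L | C.I q l ∧ ∃ s, C.I s l ∧ C.I s m ∧ s ∈ R})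
          ⊆ {l : L | l ≠ m ∧ ¬ ∃ s, C.I s m ∧ C.I s l} := by
        rintro l ⟨hql, hln⟩
        simp only [Set.mem_union, Set.mem_inter_iff, Set.mem_setOf_eq, not_or] at hln
        refine ⟨fun hcon => hqm (hcon ▸ hql), ?_⟩
        rintro ⟨s, hsm, hsl⟩
        have hsq : s ≠ q := fun hcon => hqm (hcon ▸ hsm)
        have hsR : s ∉ R := fun hcon => hln.2 ⟨hql, s, hsl, hsm, hcon⟩
        exact hln.1 ⟨hql, hcnd s hsm hsq hsR l hql hsl⟩
      have hglen := Set.ncard_le_ncard hgood (Set.toFinite _)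
      have hcoverr : r ≤ ({l : L | C.I q l}
            \ (({l : L | C.I q l} ∩ N) ∪ {l : L | C.I q l ∧ ∃ s, C.I s l ∧ C.I s m ∧ s ∈ R})).ncard
          + (({l : L | C.I q l} ∩ N).ncard
            + {l : L | C.I q l ∧ ∃ s, C.I s l ∧ C.I s m ∧ s ∈ R}.ncard) := by
        have hsplit : {l : L | C.I q l} ⊆ ({l : L | C.I q l}
              \ (({l : L | C.I q l} ∩ N) ∪ {l : L | C.I q l ∧ ∃ s, C.I s l ∧ C.I s m ∧ s ∈ R}))
            ∪ (({l : L | C.I q l} ∩ N) ∪ {l : L | C.I q l ∧ ∃ s, C.I s l ∧ C.I s m ∧ s ∈ R}) := by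
          intro l hl
          by_cases hmem : l ∈ ({l : L | C.I q l} ∩ N)
              ∪ {l : L | C.I q l ∧ ∃ s, C.I s l ∧ C.I s m ∧ s ∈ R}
          · exact Or.inr hmem
          · exact Or.inl ⟨hl, hmem⟩
        have h1 := Set.ncard_le_ncard hsplit (Set.toFinite _)
        have h2 := Set.ncard_union_le ({l : L | C.I q l}
            \ (({l : L | C.I q l} ∩ N) ∪ {l : L | C.I q l ∧ ∃ s, C.I s l ∧ C.I s m ∧ s ∈ R}))
          (({l : L | C.I q l} ∩ N) ∪ {l : L | C.I q l ∧ ∃ s, C.I s l ∧ C.I s m ∧ s ∈ R})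
        have h3 := Set.ncard_union_le ({l : L | C.I q l} ∩ N)
          {l : L | C.I q l ∧ ∃ s, C.I s l ∧ C.I s m ∧ s ∈ R}
        rw [C.pointDeg q] at h1
        omega
      omega
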